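/- Let $U,W:[0,1]^2\to[0,1]$ be graphons with degree functions bounded below a.e. by $\varepsilon>0$. Then for any measurable functions $f,g:[0,1]\to[0,1]$, the term $\big|\int_{[0,1]^2}\big(\frac{1}{d_W(x)}-\frac{1}{d_U(x)}\big)U(x,y)f(x)g(y)\,dx\,dy\big| \le \frac{1}{\varepsilon}\|W-U\|_\square$. -/

import Mathlib

open MeasureTheory

noncomputable section

def I01 : Set ℝ := Set.Icc 0 1

def cutNorm (F : ℝ → ℝ → ℝ) : ℝ :=
  sSup { c : ℝ | ∃ f g : ℝ → ℝ, Measurable f ∧ Measurable g ∧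
    (∀ x, f x ∈ I01) ∧ (∀ x, g x ∈ I01) ∧
    c = |∫ x in I01, ∫ y in I01, F x y * f x * g y| }

def degree (W : ℝ → ℝ → ℝ) (x : ℝ) : ℝ := ∫ y in I01, W x y

theorem stmt2 (U W : ℝ → ℝ → ℝ)
    (hUmeas : Measurable (Function.uncurry U)) (hWmeas : Measurable (Function.uncurry W))
    (hUsym : ∀ x y, U x y = U y x) (hWsym : ∀ x y, W x y = W y x)
    (hUrange : ∀ x y, U x y ∈ I01) (hWrange : ∀ x y, W x y ∈ I01)
    (ε : ℝ) (hε : 0 < ε)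
    (hdW : ∀ᵐ x ∂(volume.restrict I01), ε < degree W x)
    (hdU : ∀ᵐ x ∂(volume.restrict I01), ε < degree U x)
    (f g : ℝ → ℝ) (hf : Measurable f) (hg : Measurable g)
    (hfr : ∀ x, f x ∈ I01) (hgr : ∀ x, g x ∈ I01) :
    |∫ x in I01, ∫ y in I01,
        (1 / degree W x - 1 / degree U x) * U x y * f x * g y|
      ≤ (1 / ε) * cutNorm (fun x y => W x y - U x y) := by
  have hI : MeasurableSet I01 := measurableSet_Icc
  have hvol : volume I01 = 1 := by simp [I01]
  have hvolfin : volume I01 < ⊤ := by rw [hvol]; exact ENNReal.one_lt_top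
  have hvolr : (volume I01).toReal = 1 := by rw [hvol]; simp
  -- integrability helper
  have hIntOn : ∀ (h : ℝ → ℝ), Measurable h → (∀ y, h y ∈ I01) → IntegrableOn h I01 := by
    intro h hm hr
    refine ((integrableOn_const_iff (C := (1:ℝ))).2 (Or.inr hvolfin)).mono' hm.aestronglyMeasurable ?_
    exact Filter.Eventually.of_forall fun y => by
      rw [Real.norm_eq_abs, abs_of_nonneg (hr y).1]; exact (hr y).2
  have hUx : ∀ x, Measurable fun y => U x y := fun x => hUmeas.of_uncurry_left
  have hWx : ∀ x, Measurable fun y => W x y := fun x => hWmeas.of_uncurry_left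
  have hUint : ∀ x, IntegrableOn (fun y => U x y) I01 := fun x =>
    hIntOn _ (hUx x) (fun y => hUrange x y)
  have hWint : ∀ x, IntegrableOn (fun y => W x y) I01 := fun x =>
    hIntOn _ (hWx x) (fun y => hWrange x y)
  have hUgint : ∀ x, IntegrableOn (fun y => U x y * g y) I01 := fun x =>
    hIntOn _ ((hUx x).mul hg) (fun y =>
      ⟨mul_nonneg (hUrange x y).1 (hgr y).1,
        mul_le_one₀ (hUrange x y).2 (hgr y).1 (hgr y).2⟩)
  set G : ℝ → ℝ := fun x => ∫ y in I01, U x y * g y with hGdef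
  have hGmeas : Measurable G := by
    have hm : StronglyMeasurable fun p : ℝ × ℝ => U p.1 p.2 * g p.2 :=
      ((hUmeas.mul (hg.comp measurable_snd))).stronglyMeasurable
    exact hm.integral_prod_right'.measurable
  have hdWmeas : Measurable (degree W) := by
    have hm : StronglyMeasurable (Function.uncurry W) := hWmeas.stronglyMeasurable
    exact hm.integral_prod_right'.measurable
  have hdUmeas : Measurable (degree U) := by
    have hm : StronglyMeasurable (Function.uncurry U) := hUmeas.stronglyMeasurable
    exact hm.integral_prod_right'.measurable
  set ψ : ℝ → ℝ := fun x => max 0 (min 1 (ε * (f x * G x) / (degree W x * degree U x)))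
    with hψdef
  have hψmeas : Measurable ψ := by
    apply Measurable.max measurable_const
    apply Measurable.min measurable_const
    exact ((measurable_const.mul (hf.mul hGmeas)).div (hdWmeas.mul hdUmeas))
  have hψ01 : ∀ x, ψ x ∈ I01 := fun x =>
    ⟨le_max_left _ _, max_le zero_le_one (min_le_left _ _)⟩
  -- rewrite inner integral of the LHS
  have inner1 : ∀ x, (∫ y in I01,
      (1 / degree W x - 1 / degree U x) * U x y * f x * g y)
      = (1 / degree W x - 1 / degree U x) * f x * G x := by
    intro x
    have h1 : (fun y => (1 / degree W x - 1 / degree U x) * U x y * f x * g y)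
        = fun y => ((1 / degree W x - 1 / degree U x) * f x) * (U x y * g y) := by
      funext y; ring
    rw [h1, integral_const_mul]
  have eq1 : (∫ x in I01, ∫ y in I01,
      (1 / degree W x - 1 / degree U x) * U x y * f x * g y)
      = ∫ x in I01, (1 / degree W x - 1 / degree U x) * f x * G x :=
    integral_congr_ae (Filter.Eventually.of_forall inner1)
  -- a.e. identity
  have hae : ∀ᵐ x ∂(volume.restrict I01),
      (1 / degree W x - 1 / degree U x) * f x * G x
        = -((1 / ε) * (ψ x * (degree W x - degree U x))) := by
    filter_upwards [hdW, hdU] with x hxW hxU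
    have hWpos : 0 < degree W x := hε.trans hxW
    have hUpos : 0 < degree U x := hε.trans hxU
    have hG0 : 0 ≤ G x :=
      setIntegral_nonneg hI fun y _ => mul_nonneg (hUrange x y).1 (hgr y).1
    have hGle : G x ≤ degree U x := by
      refine integral_mono (hUgint x) (hUint x) fun y => ?_
      exact mul_le_of_le_one_right (hUrange x y).1 (hgr y).2
    have ht0 : 0 ≤ ε * (f x * G x) / (degree W x * degree U x) := by
      have := (hfr x).1
      positivity
    have ht1 : ε * (f x * G x) / (degree W x * degree U x) ≤ 1 := by
      rw [div_le_one (by positivity)]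
      have h1 : f x * G x ≤ degree U x := by
        calc f x * G x ≤ 1 * G x := mul_le_mul_of_nonneg_right (hfr x).2 hG0
        _ = G x := one_mul _
        _ ≤ degree U x := hGle
      nlinarith
    have hψx : ψ x = ε * (f x * G x) / (degree W x * degree U x) := by
      rw [hψdef]; simp only []
      rw [min_eq_right ht1, max_eq_right ht0]
    rw [hψx]
    have hεne : ε ≠ 0 := ne_of_gt hε
    have hWne : degree W x ≠ 0 := ne_of_gt hWpos
    have hUne : degree U x ≠ 0 := ne_of_gt hUpos
    field_simp
    ring
  have eq2 : (∫ x in I01, (1 / degree W x - 1 / degree U x) * f x * G x)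
      = -((1 / ε) * ∫ x in I01, ψ x * (degree W x - degree U x)) := by
    rw [integral_congr_ae hae, integral_neg, integral_const_mul]
  -- the candidate element of the cut-norm set
  have inner2 : ∀ x, (∫ y in I01, (W x y - U x y) * ψ x * (1 : ℝ))
      = ψ x * (degree W x - degree U x) := by
    intro x
    have h1 : (fun y => (W x y - U x y) * ψ x * (1 : ℝ))
        = fun y => ψ x * (W x y - U x y) := by funext y; ring
    rw [h1, integral_const_mul, integral_sub (hWint x) (hUint x)]
    rfl
  have hc0 : |∫ x in I01, ∫ y in I01, (W x y - U x y) * ψ x * (1 : ℝ)|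
      = |∫ x in I01, ψ x * (degree W x - degree U x)| := by
    rw [integral_congr_ae (Filter.Eventually.of_forall inner2)]
  have hmem : |∫ x in I01, ψ x * (degree W x - degree U x)|
      ∈ { c : ℝ | ∃ f g : ℝ → ℝ, Measurable f ∧ Measurable g ∧
        (∀ x, f x ∈ I01) ∧ (∀ x, g x ∈ I01) ∧
        c = |∫ x in I01, ∫ y in I01, (fun x y => W x y - U x y) x y * f x * g y| } := by
    refine ⟨ψ, fun _ => 1, hψmeas, measurable_const, hψ01,
      fun _ => ⟨zero_le_one, le_refl 1⟩, ?_⟩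
    rw [← hc0]
  have hbdd : BddAbove { c : ℝ | ∃ f g : ℝ → ℝ, Measurable f ∧ Measurable g ∧
      (∀ x, f x ∈ I01) ∧ (∀ x, g x ∈ I01) ∧
      c = |∫ x in I01, ∫ y in I01, (fun x y => W x y - U x y) x y * f x * g y| } := by
    refine ⟨1, ?_⟩
    rintro c ⟨f', g', hf', hg', hf'r, hg'r, rfl⟩
    have hinner : ∀ x ∈ I01, ‖∫ y in I01, (W x y - U x y) * f' x * g' y‖ ≤ 1 := by
      intro x _
      calc ‖∫ y in I01, (W x y - U x y) * f' x * g' y‖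
          ≤ 1 * (volume I01).toReal := by
            refine norm_setIntegral_le_of_norm_le_const hvolfin fun y _ => ?_
            rw [Real.norm_eq_abs, abs_mul, abs_mul]
            have h1 : |W x y - U x y| ≤ 1 := by
              rw [abs_le]
              constructor
              · have := (hWrange x y).1; have := (hUrange x y).2; linarith
              · have := (hWrange x y).2; have := (hUrange x y).1; linarith
            have h2 : |f' x| ≤ 1 := by
              rw [abs_of_nonneg (hf'r x).1]; exact (hf'r x).2
            have h3 : |g' y| ≤ 1 := by
              rw [abs_of_nonneg (hg'r y).1]; exact (hg'r y).2
            exact mul_le_one₀ (mul_le_one₀ h1 (abs_nonneg _) h2) (abs_nonneg _) h3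
        _ = 1 := by rw [hvolr, mul_one]
    calc |∫ x in I01, ∫ y in I01, (W x y - U x y) * f' x * g' y|
        ≤ 1 * (volume I01).toReal :=
          norm_setIntegral_le_of_norm_le_const hvolfin hinner
      _ = 1 := by rw [hvolr, mul_one]
  -- put everything together
  rw [eq1, eq2, abs_neg, abs_mul, abs_of_nonneg (le_of_lt (by positivity : (0:ℝ) < 1/ε))]
  have hle : |∫ x in I01, ψ x * (degree W x - degree U x)|
      ≤ cutNorm (fun x y => W x y - U x y) := le_csSup hbdd hmem
  exact mul_le_mul_of_nonneg_left hle (by positivity)
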